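/- Let G and H be vertex-disjoint matching covered graphs, let u ∈ V(G) and v ∈ V(H) with deg_G(u) = deg_H(v), and let θ be a bijection from the edges of H incident with v to the edges of G incident with u. Then the splicing G(u) ⊙ H(v) with respect to θ — obtained from the union of G − u and H − v by joining, for each edge e incident with v, the end of e in H − v to the end of θ(e) in G − u — is matching covered. -/

import Mathlib

open SimpleGraph

universe u

/-- A graph has a perfect matching. -/
def HasPM {V : Type u} (G : SimpleGraph V) : Prop :=
  ∃ M : G.Subgraph, M.IsPerfectMatching

/-- A connected graph with at least two vertices in which every edge
lies in a perfect matching. -/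
def MatchingCovered {V : Type u} (G : SimpleGraph V) : Prop :=
  G.Connected ∧ 2 ≤ Nat.card V ∧
    ∀ e ∈ G.edgeSet, ∃ M : G.Subgraph, M.IsPerfectMatching ∧ e ∈ M.edgeSet

/-- Number of odd connected components. -/
noncomputable def oddComps {V : Type u} (G : SimpleGraph V) : ℕ :=
  Nat.card {c : G.ConnectedComponent // Odd (Nat.card c.supp)}

/-- An edge is removable if its deletion leaves a matching covered graph. -/
def Removable {V : Type u} (G : SimpleGraph V) (e : Sym2 V) : Prop :=
  e ∈ G.edgeSet ∧ MatchingCovered (G.deleteEdges {e})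

/-- Removable, with absent edges counted as removable. -/
def RemovableExt {V : Type u} (G : SimpleGraph V) (e : Sym2 V) : Prop :=
  e ∉ G.edgeSet ∨ Removable G e

/-- Degree of a vertex. -/
noncomputable def degN {V : Type u} (G : SimpleGraph V) (v : V) : ℕ :=
  Nat.card (G.neighborSet v)

/-- A graph on at least four vertices is bicritical if deleting any two
distinct vertices leaves a graph with a perfect matching. -/
def Bicritical {V : Type u} (G : SimpleGraph V) : Prop :=
  4 ≤ Nat.card V ∧ ∀ u v : V, u ≠ v → HasPM (G.induce ({u, v}ᶜ : Set V))

/-- A barrier: nonempty set `B` with `o(G - B) = |B|`. -/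
def IsBarrier {V : Type u} (G : SimpleGraph V) (B : Set V) : Prop :=
  B.Nonempty ∧ oddComps (G.induce (Bᶜ : Set V)) = B.ncard

/-- 2-connectedness. -/
def TwoConnected {V : Type u} (G : SimpleGraph V) : Prop :=
  3 ≤ Nat.card V ∧ ∀ s : Set V, s.ncard ≤ 1 → (G.induce (sᶜ : Set V)).Connected

/-- 3-connectedness. -/
def ThreeConnected {V : Type u} (G : SimpleGraph V) : Prop :=
  4 ≤ Nat.card V ∧ ∀ s : Set V, s.ncard ≤ 2 → (G.induce (sᶜ : Set V)).Connected

/-- A brick is a 3-connected bicritical graph. -/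
def IsBrick {V : Type u} (G : SimpleGraph V) : Prop :=
  ThreeConnected G ∧ Bicritical G

/-- Map a vertex to the vertex set of the contraction `G/X`. -/
noncomputable def toContract {V : Type u} (X : Set V) (v : V) : ↥(Xᶜ) ⊕ Unit := by
  classical exact if h : v ∈ X then Sum.inr () else Sum.inl ⟨v, h⟩

/-- Contraction `G/X` of the set `X` to a single vertex. -/
noncomputable def contract {V : Type u} (G : SimpleGraph V) (X : Set V) :
    SimpleGraph (↥(Xᶜ) ⊕ Unit) :=
  SimpleGraph.fromRel (fun a b =>
    ∃ x y, G.Adj x y ∧ a = toContract X x ∧ b = toContract X y)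

/-- The edge cut `∂(X)`. -/
def cutEdges {V : Type u} (G : SimpleGraph V) (X : Set V) : Set (Sym2 V) :=
  {e | e ∈ G.edgeSet ∧ ∃ x y, e = s(x, y) ∧ x ∈ X ∧ y ∉ X}

/-- A tight cut: every perfect matching meets it in exactly one edge. -/
def IsTightCut {V : Type u} (G : SimpleGraph V) (X : Set V) : Prop :=
  ∀ M : G.Subgraph, M.IsPerfectMatching → (cutEdges G X ∩ M.edgeSet).ncard = 1

/-- A separating cut: both contractions are matching covered. -/
def IsSeparatingCut {V : Type u} (G : SimpleGraph V) (X : Set V) : Prop :=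
  MatchingCovered (contract G X) ∧ MatchingCovered (contract G Xᶜ)

/-- `(A, B)` is a bipartition of `G`. -/
def IsBipartition {V : Type u} (G : SimpleGraph V) (A B : Set V) : Prop :=
  A ∪ B = Set.univ ∧ A ∩ B = ∅ ∧
    ∀ u v : V, G.Adj u v → (u ∈ A ∧ v ∈ B) ∨ (u ∈ B ∧ v ∈ A)

/-- A P-set of a bipartite matching covered graph with bipartition `(A, B)`. -/
def IsPSet {V : Type u} (G : SimpleGraph V) (A B X : Set V) : Prop :=
  (X ∩ A).ncard = (X ∩ B).ncard ∧
    ((∃! p : V × V, p.1 ∈ X ∩ A ∧ p.2 ∈ B \ X ∧ G.Adj p.1 p.2) ∨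
     (∃! p : V × V, p.1 ∈ A \ X ∧ p.2 ∈ X ∩ B ∧ G.Adj p.1 p.2))

/-- The splicing `G(u) ⊙ H(v)` with respect to the bijection `θ`. -/
def splice {VG VH : Type u} (G : SimpleGraph VG) (H : SimpleGraph VH)
    (u : VG) (v : VH) (θ : ↥(H.neighborSet v) ≃ ↥(G.neighborSet u)) :
    SimpleGraph ({x : VG // x ≠ u} ⊕ {y : VH // y ≠ v}) :=
  SimpleGraph.fromRel (fun a b =>
    match a, b with
    | .inl a, .inl b => G.Adj a.1 b.1
    | .inr a, .inr b => H.Adj a.1 b.1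
    | .inl a, .inr b =>
        ∃ h : b.1 ∈ H.neighborSet v, ((θ ⟨b.1, h⟩ : ↥(G.neighborSet u)) : VG) = a.1
    | _, _ => False)

open Function in
lemma card_modEq_fixed {α : Type*} [Finite α] (f : α → α) (hf : Function.Involutive f) :
    Nat.card α ≡ Nat.card (Function.fixedPoints f) [MOD 2] := by
  classical
  cases nonempty_fintype α
  haveI : Fact (Nat.Prime 2) := ⟨Nat.prime_two⟩
  let g : Function.End α := f
  have h1 : g * g = 1 := funext hf
  have h : g ^ 2 ^ 1 = 1 := by rw [pow_one, pow_two, h1]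
  have := Equiv.Perm.card_fixedPoints_modEq h
  simp only [Nat.card_eq_fintype_card] at this ⊢
  convert this using 2

lemma even_of_invol {α : Type*} [Finite α] (f : α → α) (hf : Function.Involutive f)
    (hfix : ∀ x, f x ≠ x) : Even (Nat.card α) := by
  have h := card_modEq_fixed f hf
  have he : Function.fixedPoints f = ∅ := by
    ext x; simp [Function.mem_fixedPoints, Function.IsFixedPt, hfix x]
  rw [he] at h
  simp only [Nat.card_eq_fintype_card] at h
  norm_num at h
  exact Nat.even_iff.mpr (by simpa [Nat.ModEq] using h)

lemma odd_of_invol {α : Type*} [Finite α] (f : α → α) (hf : Function.Involutive f)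
    (a : α) (hfix : ∀ x, f x = x ↔ x = a) : Odd (Nat.card α) := by
  have h := card_modEq_fixed f hf
  have he : Function.fixedPoints f = {a} := by
    ext x; simp [Function.mem_fixedPoints, Function.IsFixedPt, hfix x]
  rw [he] at h
  simp only [Nat.card_unique, Nat.card_eq_fintype_card] at h
  exact Nat.odd_iff.mpr (by simpa [Nat.ModEq] using h)

open SimpleGraph



/-- The graph `G - u` on the subtype of vertices different from `u`. -/
private def delv {V : Type u} (G : SimpleGraph V) (w : V) :
    SimpleGraph {x : V // x ≠ w} :=
  G.comap Subtype.val

private lemma delv_adj {V : Type u} (G : SimpleGraph V) (w : V) {x y : {x : V // x ≠ w}} :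
    (delv G w).Adj x y ↔ G.Adj x.1 y.1 := Iff.rfl

private lemma pm_partner {V : Type u} {G : SimpleGraph V} {M : G.Subgraph}
    (hM : M.IsPerfectMatching) :
    ∃ p : V → V, (∀ x, M.Adj x (p x)) ∧ (∀ x y, M.Adj x y → y = p x) := by
  classical
  have h : ∀ x, ∃! w, M.Adj x w := fun x => hM.1 (hM.2 x)
  choose p hp hup using h
  exact ⟨p, hp, hup⟩

private lemma comp_even {V : Type u} [Finite V] {G : SimpleGraph V} {M : G.Subgraph}
    (hM : M.IsPerfectMatching) {w a : V} (hMa : M.Adj w a)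
    (D : (delv G w).ConnectedComponent)
    (hnot : ∀ h : a ≠ w, (⟨a, h⟩ : {x : V // x ≠ w}) ∉ D.supp) :
    Even (Nat.card D.supp) := by
  classical
  obtain ⟨p, hp, hup⟩ := pm_partner hM
  have hpa : p w = a := (hup w a hMa).symm
  have hpp : ∀ x, p (p x) = x := fun x => (hup (p x) x (hp x).symm).symm
  have hpirr : ∀ x, p x ≠ x := by
    intro x hx
    have h2 := M.adj_sub (hp x)
    rw [hx] at h2
    exact G.irrefl h2
  have hpnw : ∀ x : V, x ≠ a → p x ≠ w := by
    intro x hxa hc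
    have h2 : M.Adj w x := by
      have := (hp x).symm
      rwa [hc] at this
    exact hxa ((hup w x h2).trans hpa)
  have hmemp : ∀ (x : V) (hxw : x ≠ w) (h : p x ≠ w),
      (⟨x, hxw⟩ : {x : V // x ≠ w}) ∈ D.supp → (⟨p x, h⟩ : {x : V // x ≠ w}) ∈ D.supp := by
    intro x hxw h hxD
    have hadj : (delv G w).Adj ⟨x, hxw⟩ ⟨p x, h⟩ := M.adj_sub (hp x)
    rw [SimpleGraph.ConnectedComponent.mem_supp_iff] at hxD ⊢
    rw [← hxD]
    exact (SimpleGraph.ConnectedComponent.sound hadj.reachable).symm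
  have hva : ∀ z : D.supp, z.1.1 ≠ a := by
    rintro ⟨⟨x, hxw⟩, hxD⟩ rfl
    exact hnot hxw hxD
  refine even_of_invol (fun z => ⟨⟨p z.1.1, hpnw z.1.1 (hva z)⟩, hmemp z.1.1 z.1.2 _ z.2⟩) ?_ ?_
  · intro z
    apply Subtype.ext
    apply Subtype.ext
    exact hpp z.1.1
  · intro z hz
    exact hpirr z.1.1 (congrArg (fun t => t.1.1) hz)

private lemma comp_odd {V : Type u} [Finite V] {G : SimpleGraph V} {M : G.Subgraph}
    (hM : M.IsPerfectMatching) {w a : V} (hMa : M.Adj w a) (haw : a ≠ w)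
    (D : (delv G w).ConnectedComponent)
    (hmem : (⟨a, haw⟩ : {x : V // x ≠ w}) ∈ D.supp) :
    Odd (Nat.card D.supp) := by
  classical
  obtain ⟨p, hp, hup⟩ := pm_partner hM
  have hpa : p w = a := (hup w a hMa).symm
  have hpw : p a = w := (hup a w hMa.symm).symm
  have hpp : ∀ x, p (p x) = x := fun x => (hup (p x) x (hp x).symm).symm
  have hpirr : ∀ x, p x ≠ x := by
    intro x hx
    have h2 := M.adj_sub (hp x)
    rw [hx] at h2
    exact G.irrefl h2
  have hpnw : ∀ x : V, x ≠ a → p x ≠ w := by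
    intro x hxa hc
    have h2 : M.Adj w x := by
      have := (hp x).symm
      rwa [hc] at this
    exact hxa ((hup w x h2).trans hpa)
  have hpna : ∀ x : V, x ≠ w → p x ≠ a := by
    intro x hxw hc
    have h2 : M.Adj a x := by
      have := (hp x).symm
      rwa [hc] at this
    exact hxw ((hup a x h2).trans hpw)
  have hmemp : ∀ (x : V) (hxw : x ≠ w) (h : p x ≠ w),
      (⟨x, hxw⟩ : {x : V // x ≠ w}) ∈ D.supp → (⟨p x, h⟩ : {x : V // x ≠ w}) ∈ D.supp := by
    intro x hxw h hxD
    have hadj : (delv G w).Adj ⟨x, hxw⟩ ⟨p x, h⟩ := M.adj_sub (hp x)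
    rw [SimpleGraph.ConnectedComponent.mem_supp_iff] at hxD ⊢
    rw [← hxD]
    exact (SimpleGraph.ConnectedComponent.sound hadj.reachable).symm
  refine odd_of_invol
    (fun z => if hza : z.1.1 = a then z else
      ⟨⟨p z.1.1, hpnw z.1.1 hza⟩, hmemp z.1.1 z.1.2 _ z.2⟩) ?_ ⟨⟨a, haw⟩, hmem⟩ ?_
  · intro z
    by_cases hza : z.1.1 = a
    · simp [hza]
    · have h1 : p z.1.1 ≠ a := hpna z.1.1 z.1.2
      simp only [hza, dite_false, dif_neg h1]
      apply Subtype.ext; apply Subtype.ext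
      exact hpp z.1.1
  · intro z
    constructor
    · intro hz
      by_cases hza : z.1.1 = a
      · apply Subtype.ext; apply Subtype.ext; exact hza
      · simp only [dif_neg hza] at hz
        exact absurd (congrArg (fun t => t.1.1) hz) (hpirr z.1.1)
    · rintro rfl
      simp

private lemma reach_nbr {V : Type u} {G : SimpleGraph V} :
    ∀ {x z : V} (_ : G.Walk x z) (hx : x ≠ z), ∃ (a : V) (_ : G.Adj z a) (hane : a ≠ z),
      (delv G z).Reachable ⟨x, hx⟩ ⟨a, hane⟩ := by
  intro x z p
  induction p with
  | nil => intro hx; exact absurd rfl hx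
  | @cons x y z h p ih =>
    intro hx
    by_cases hy : y = z
    · subst hy
      exact ⟨x, h.symm, hx, SimpleGraph.Reachable.refl _⟩
    · obtain ⟨a, ha, hane, hr⟩ := ih hy
      have hadj : (delv G z).Adj ⟨x, hx⟩ ⟨y, hy⟩ := h
      exact ⟨a, ha, hane, hadj.reachable.trans hr⟩

private lemma nbrs_reach {V : Type u} [Finite V] {G : SimpleGraph V}
    (hG : MatchingCovered G) (w : V) {a a' : V} (ha : G.Adj w a) (ha' : G.Adj w a') :
    (delv G w).Reachable ⟨a, ha.symm.ne⟩ ⟨a', ha'.symm.ne⟩ := by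
  obtain ⟨M, hM, hMe⟩ := hG.2.2 s(w, a) (by rwa [SimpleGraph.mem_edgeSet])
  obtain ⟨M', hM', hMe'⟩ := hG.2.2 s(w, a') (by rwa [SimpleGraph.mem_edgeSet])
  have hMa : M.Adj w a := SimpleGraph.Subgraph.mem_edgeSet.mp hMe
  have hMa' : M'.Adj w a' := SimpleGraph.Subgraph.mem_edgeSet.mp hMe'
  set D := (delv G w).connectedComponentMk ⟨a', ha'.symm.ne⟩ with hD
  have hodd : Odd (Nat.card D.supp) :=
    comp_odd hM' hMa' ha'.symm.ne D (by rw [SimpleGraph.ConnectedComponent.mem_supp_iff])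
  have hmem : (⟨a, ha.symm.ne⟩ : {x : V // x ≠ w}) ∈ D.supp := by
    by_contra hcon
    have heven : Even (Nat.card D.supp) := by
      refine comp_even hM hMa D ?_
      intro h hmem2
      exact hcon hmem2
    exact (Nat.not_even_iff_odd.mpr hodd) heven
  rw [SimpleGraph.ConnectedComponent.mem_supp_iff] at hmem
  exact SimpleGraph.ConnectedComponent.eq.mp hmem


private lemma exists_nbr {V : Type u} [Finite V] {G : SimpleGraph V}
    (hG : MatchingCovered G) (w : V) : ∃ a, G.Adj w a := by
  have hnt : Nontrivial V := Finite.one_lt_card_iff_nontrivial.mp hG.2.1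
  obtain ⟨x, hx⟩ := exists_ne w
  obtain ⟨p⟩ := hG.1.preconnected x w
  obtain ⟨a, ha, -, -⟩ := reach_nbr p hx
  exact ⟨a, ha⟩

private lemma delv_conn {V : Type u} [Finite V] {G : SimpleGraph V}
    (hG : MatchingCovered G) (w : V) : (delv G w).Connected := by
  classical
  obtain ⟨a₀, ha₀⟩ := exists_nbr hG w
  haveI : Nonempty {x : V // x ≠ w} := ⟨⟨a₀, ha₀.symm.ne⟩⟩
  refine (SimpleGraph.connected_iff _).mpr ⟨?_, by assumption⟩
  have key : ∀ x : {x : V // x ≠ w}, (delv G w).Reachable x ⟨a₀, ha₀.symm.ne⟩ := by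
    intro x
    obtain ⟨p⟩ := hG.1.preconnected x.1 w
    obtain ⟨a, ha, hane, hr⟩ := reach_nbr p x.2
    have : (delv G w).Reachable ⟨a, hane⟩ ⟨a₀, ha₀.symm.ne⟩ := by
      have := nbrs_reach hG w ha ha₀
      convert this using 2
    exact hr.trans this
  intro x y
  exact (key x).trans (key y).symm


section SpliceLemmas

variable {VG VH : Type u} {G : SimpleGraph VG} {H : SimpleGraph VH} {u : VG} {v : VH}
  {θ : ↥(H.neighborSet v) ≃ ↥(G.neighborSet u)}

private lemma splice_adj_ll {x y : {x : VG // x ≠ u}} :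
    (splice G H u v θ).Adj (.inl x) (.inl y) ↔ G.Adj x.1 y.1 := by
  simp only [splice, SimpleGraph.fromRel_adj]
  constructor
  · rintro ⟨hne, h | h⟩
    · exact h
    · exact h.symm
  · intro h
    refine ⟨fun heq => ?_, Or.inl h⟩
    rw [Sum.inl.injEq] at heq
    exact G.ne_of_adj h (congrArg Subtype.val heq)

private lemma splice_adj_rr {x y : {y : VH // y ≠ v}} :
    (splice G H u v θ).Adj (.inr x) (.inr y) ↔ H.Adj x.1 y.1 := by
  simp only [splice, SimpleGraph.fromRel_adj]
  constructor
  · rintro ⟨hne, h | h⟩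
    · exact h
    · exact h.symm
  · intro h
    refine ⟨fun heq => ?_, Or.inl h⟩
    rw [Sum.inr.injEq] at heq
    exact H.ne_of_adj h (congrArg Subtype.val heq)

private lemma splice_adj_lr {x : {x : VG // x ≠ u}} {y : {y : VH // y ≠ v}} :
    (splice G H u v θ).Adj (.inl x) (.inr y) ↔
      ∃ h : y.1 ∈ H.neighborSet v, ((θ ⟨y.1, h⟩ : ↥(G.neighborSet u)) : VG) = x.1 := by
  simp only [splice, SimpleGraph.fromRel_adj]
  constructor
  · rintro ⟨hne, h | h⟩
    · exact h
    · exact h.elim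
  · intro h
    exact ⟨Sum.inl_ne_inr, Or.inl h⟩

end SpliceLemmas


private lemma splice_pm {VG VH : Type u} [Finite VG] [Finite VH]
    {G : SimpleGraph VG} {H : SimpleGraph VH} {u : VG} {v : VH}
    {θ : ↥(H.neighborSet v) ≃ ↥(G.neighborSet u)} {M : G.Subgraph} {N : H.Subgraph}
    (hM : M.IsPerfectMatching) (hN : N.IsPerfectMatching)
    {a : VG} {b : VH} (hMa : M.Adj u a) (hNb : N.Adj v b)
    (hbn : b ∈ H.neighborSet v)
    (hθ : ((θ ⟨b, hbn⟩ : ↥(G.neighborSet u)) : VG) = a) :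
    ∃ S : (splice G H u v θ).Subgraph, S.IsPerfectMatching ∧
      (∀ (x y : VG) (hx : x ≠ u) (hy : y ≠ u), M.Adj x y →
        S.Adj (.inl ⟨x, hx⟩) (.inl ⟨y, hy⟩)) ∧
      (∀ (x y : VH) (hx : x ≠ v) (hy : y ≠ v), N.Adj x y →
        S.Adj (.inr ⟨x, hx⟩) (.inr ⟨y, hy⟩)) ∧
      (∀ (hx : a ≠ u) (hy : b ≠ v), S.Adj (.inl ⟨a, hx⟩) (.inr ⟨b, hy⟩)) := by
  classical
  have ha : a ≠ u := (G.ne_of_adj (M.adj_sub hMa)).symm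
  have hb2 : b ≠ v := (H.ne_of_adj (N.adj_sub hNb)).symm
  obtain ⟨pM, hpM, hupM⟩ := pm_partner hM
  obtain ⟨pN, hpN, hupN⟩ := pm_partner hN
  have hpMu : pM u = a := (hupM u a hMa).symm
  have hpMa : pM a = u := (hupM a u hMa.symm).symm
  have hpNv : pN v = b := (hupN v b hNb).symm
  have hpNb : pN b = v := (hupN b v hNb.symm).symm
  set SA : ({x : VG // x ≠ u} ⊕ {y : VH // y ≠ v}) →
      ({x : VG // x ≠ u} ⊕ {y : VH // y ≠ v}) → Prop := fun p q =>
    match p, q with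
    | .inl x, .inl y => M.Adj x.1 y.1
    | .inr x, .inr y => N.Adj x.1 y.1
    | .inl x, .inr y => x.1 = a ∧ y.1 = b
    | .inr x, .inl y => y.1 = a ∧ x.1 = b
    with hSA
  have hcross : (splice G H u v θ).Adj (.inl ⟨a, ha⟩) (.inr ⟨b, hb2⟩) :=
    splice_adj_lr.mpr ⟨hbn, hθ⟩
  refine ⟨⟨Set.univ, SA, ?_, fun _ => Set.mem_univ _, ?_⟩, ⟨?_, fun p => Set.mem_univ p⟩,
    ?_, ?_, ?_⟩
  · -- adj_sub
    rintro (x | x) (y | y) h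
    · exact splice_adj_ll.mpr (M.adj_sub h)
    · obtain ⟨h1, h2⟩ := h
      have hx : x = ⟨a, ha⟩ := Subtype.ext h1
      have hy : y = ⟨b, hb2⟩ := Subtype.ext h2
      rw [hx, hy]
      exact hcross
    · obtain ⟨h1, h2⟩ := h
      have hy : y = ⟨a, ha⟩ := Subtype.ext h1
      have hx : x = ⟨b, hb2⟩ := Subtype.ext h2
      rw [hx, hy]
      exact hcross.symm
    · exact splice_adj_rr.mpr (N.adj_sub h)
  · -- symm
    constructor
    rintro (x | x) (y | y) h
    · exact h.symm
    · exact h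
    · exact h
    · exact h.symm
  · -- matching
    rintro (x | x) -
    · by_cases hxa : x.1 = a
      · refine ⟨.inr ⟨b, hb2⟩, ⟨hxa, rfl⟩, ?_⟩
        rintro (z | z) hz
        · exfalso
          have : M.Adj a z.1 := hxa ▸ hz
          exact z.2 ((hupM a z.1 this).trans hpMa)
        · exact congrArg Sum.inr (Subtype.ext hz.2)
      · have hne : pM x.1 ≠ u := by
          intro hc
          have h2 : M.Adj u x.1 := by
            have := (hpM x.1).symm
            rwa [hc] at this
          exact hxa ((hupM u x.1 h2).trans hpMu)
        refine ⟨.inl ⟨pM x.1, hne⟩, hpM x.1, ?_⟩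
        rintro (z | z) hz
        · exact congrArg Sum.inl (Subtype.ext (hupM x.1 z.1 hz))
        · exact absurd hz.1 hxa
    · by_cases hxb : x.1 = b
      · refine ⟨.inl ⟨a, ha⟩, ⟨rfl, hxb⟩, ?_⟩
        rintro (z | z) hz
        · exact congrArg Sum.inl (Subtype.ext hz.1)
        · exfalso
          have : N.Adj b z.1 := hxb ▸ hz
          exact z.2 ((hupN b z.1 this).trans hpNb)
      · have hne : pN x.1 ≠ v := by
          intro hc
          have h2 : N.Adj v x.1 := by
            have := (hpN x.1).symm
            rwa [hc] at this
          exact hxb ((hupN v x.1 h2).trans hpNv)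
        refine ⟨.inr ⟨pN x.1, hne⟩, hpN x.1, ?_⟩
        rintro (z | z) hz
        · exact absurd hz.2 hxb
        · exact congrArg Sum.inr (Subtype.ext (hupN x.1 z.1 hz))
  · intro x y hx hy hxy
    exact hxy
  · intro x y hx hy hxy
    exact hxy
  · intro hx hy
    exact ⟨rfl, rfl⟩


theorem stmt5 {VG VH : Type u} [Finite VG] [Finite VH]
    (G : SimpleGraph VG) (H : SimpleGraph VH) (u : VG) (v : VH)
    (hG : MatchingCovered G) (hH : MatchingCovered H)
    (hdeg : degN G u = degN H v)
    (θ : ↥(H.neighborSet v) ≃ ↥(G.neighborSet u)) :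
    MatchingCovered (splice G H u v θ) := by
  classical
  obtain ⟨b₀, hb₀⟩ := exists_nbr hH v
  have hb₀n : b₀ ∈ H.neighborSet v := hb₀
  set a₀ : VG := ((θ ⟨b₀, hb₀n⟩ : ↥(G.neighborSet u)) : VG) with ha₀def
  have ha₀ : G.Adj u a₀ := (θ ⟨b₀, hb₀n⟩).2
  have hcross₀ : (splice G H u v θ).Adj (.inl ⟨a₀, ha₀.symm.ne⟩) (.inr ⟨b₀, hb₀.symm.ne⟩) :=
    splice_adj_lr.mpr ⟨hb₀n, rfl⟩
  let inlHom : delv G u →g splice G H u v θ :=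
    ⟨Sum.inl, fun {x y} h => splice_adj_ll.mpr h⟩
  let inrHom : delv H v →g splice G H u v θ :=
    ⟨Sum.inr, fun {x y} h => splice_adj_rr.mpr h⟩
  have hGc := delv_conn hG u
  have hHc := delv_conn hH v
  have reachL : ∀ x : {x : VG // x ≠ u},
      (splice G H u v θ).Reachable (.inl x) (.inr ⟨b₀, hb₀.symm.ne⟩) := by
    intro x
    have h1 : (splice G H u v θ).Reachable (.inl x) (.inl ⟨a₀, ha₀.symm.ne⟩) :=
      (hGc.preconnected x ⟨a₀, ha₀.symm.ne⟩).map inlHom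
    exact h1.trans hcross₀.reachable
  have reachR : ∀ y : {y : VH // y ≠ v},
      (splice G H u v θ).Reachable (.inr y) (.inr ⟨b₀, hb₀.symm.ne⟩) := by
    intro y
    exact (hHc.preconnected y ⟨b₀, hb₀.symm.ne⟩).map inrHom
  refine ⟨?_, ?_, ?_⟩
  · refine (SimpleGraph.connected_iff _).mpr ⟨?_, ⟨.inr ⟨b₀, hb₀.symm.ne⟩⟩⟩
    rintro (x | x) (y | y)
    · exact (reachL x).trans (reachL y).symm
    · exact (reachL x).trans (reachR y).symm
    · exact (reachR x).trans (reachL y).symm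
    · exact (reachR x).trans (reachR y).symm
  · have h1 : 0 < Nat.card {x : VG // x ≠ u} :=
      @Nat.card_pos _ ⟨⟨a₀, ha₀.symm.ne⟩⟩ _
    have h2 : 0 < Nat.card {y : VH // y ≠ v} :=
      @Nat.card_pos _ ⟨⟨b₀, hb₀.symm.ne⟩⟩ _
    rw [Nat.card_sum]
    omega
  · intro e he
    induction e using Sym2.ind with
    | _ p q =>
      rw [SimpleGraph.mem_edgeSet] at he
      match p, q with
      | .inl x, .inl y =>
        have hadj : G.Adj x.1 y.1 := splice_adj_ll.mp he
        obtain ⟨M, hM, hMe⟩ := hG.2.2 s(x.1, y.1) hadj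
        have hMxy : M.Adj x.1 y.1 := SimpleGraph.Subgraph.mem_edgeSet.mp hMe
        obtain ⟨a, hMa, -⟩ := hM.1 (hM.2 u)
        have han : a ∈ G.neighborSet u := M.adj_sub hMa
        set bb : ↥(H.neighborSet v) := θ.symm ⟨a, han⟩ with hbb
        have hθ : ((θ ⟨bb.1, bb.2⟩ : ↥(G.neighborSet u)) : VG) = a := by
          rw [Subtype.coe_eta, hbb, Equiv.apply_symm_apply]
        obtain ⟨N, hN, hNe⟩ := hH.2.2 s(v, bb.1) bb.2
        have hNb : N.Adj v bb.1 := SimpleGraph.Subgraph.mem_edgeSet.mp hNe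
        obtain ⟨S, hS, hSM, -, -⟩ := splice_pm hM hN hMa hNb bb.2 hθ
        exact ⟨S, hS, SimpleGraph.Subgraph.mem_edgeSet.mpr (hSM x.1 y.1 x.2 y.2 hMxy)⟩
      | .inr x, .inr y =>
        have hadj : H.Adj x.1 y.1 := splice_adj_rr.mp he
        obtain ⟨N, hN, hNe⟩ := hH.2.2 s(x.1, y.1) hadj
        have hNxy : N.Adj x.1 y.1 := SimpleGraph.Subgraph.mem_edgeSet.mp hNe
        obtain ⟨b, hNb, -⟩ := hN.1 (hN.2 v)
        have hbn : b ∈ H.neighborSet v := N.adj_sub hNb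
        obtain ⟨M, hM, hMe⟩ := hG.2.2 s(u, ((θ ⟨b, hbn⟩ : ↥(G.neighborSet u)) : VG))
          (θ ⟨b, hbn⟩).2
        have hMa : M.Adj u ((θ ⟨b, hbn⟩ : ↥(G.neighborSet u)) : VG) :=
          SimpleGraph.Subgraph.mem_edgeSet.mp hMe
        obtain ⟨S, hS, -, hSN, -⟩ := splice_pm hM hN hMa hNb hbn rfl
        exact ⟨S, hS, SimpleGraph.Subgraph.mem_edgeSet.mpr (hSN x.1 y.1 x.2 y.2 hNxy)⟩
      | .inl x, .inr y =>
        obtain ⟨hbn, hθ⟩ := splice_adj_lr.mp he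
        have hadjG : G.Adj u x.1 := hθ ▸ (θ ⟨y.1, hbn⟩).2
        obtain ⟨M, hM, hMe⟩ := hG.2.2 s(u, x.1) hadjG
        have hMa : M.Adj u x.1 := SimpleGraph.Subgraph.mem_edgeSet.mp hMe
        obtain ⟨N, hN, hNe⟩ := hH.2.2 s(v, y.1) hbn
        have hNb : N.Adj v y.1 := SimpleGraph.Subgraph.mem_edgeSet.mp hNe
        obtain ⟨S, hS, -, -, hScross⟩ := splice_pm hM hN hMa hNb hbn hθ
        exact ⟨S, hS, SimpleGraph.Subgraph.mem_edgeSet.mpr (hScross x.2 y.2)⟩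
      | .inr y, .inl x =>
        obtain ⟨hbn, hθ⟩ := splice_adj_lr.mp he.symm
        have hadjG : G.Adj u x.1 := hθ ▸ (θ ⟨y.1, hbn⟩).2
        obtain ⟨M, hM, hMe⟩ := hG.2.2 s(u, x.1) hadjG
        have hMa : M.Adj u x.1 := SimpleGraph.Subgraph.mem_edgeSet.mp hMe
        obtain ⟨N, hN, hNe⟩ := hH.2.2 s(v, y.1) hbn
        have hNb : N.Adj v y.1 := SimpleGraph.Subgraph.mem_edgeSet.mp hNe
        obtain ⟨S, hS, -, -, hScross⟩ := splice_pm hM hN hMa hNb hbn hθ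
        exact ⟨S, hS, SimpleGraph.Subgraph.mem_edgeSet.mpr (hScross x.2 y.2).symm⟩
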